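/- Detailed balance solutions with full support are scaled-geometric consistent in ratios: if J < K are positive integers, μ on {0,...,J} and ν on {0,...,K} are strictly positive probability measures satisfying μ(a)/μ(0) = ν(a)/ν(0) for all 0 ≤ a ≤ J and ν(a)ν(b) = ν(J-a)ν(2a+b-J) whenever J ≤ a+b ≤ K (with a ≤ J, b ≤ K), and ν(a)ν(b) = ν(b+J-K)ν(a+K-J) whenever a+b ≥ K, then setting ℓ_a = ν(a+1)/ν(a) one has ℓ_a = ℓ_{J-a} for all a ∈ {0,...,J}. -/

import Mathlib

/-- First component of the BBS(J,K) local update map. -/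
def F1 (J K a b : ℤ) : ℤ := a + min b (J - a) - min a (K - b)

/-- Second component of the BBS(J,K) local update map. -/
def F2 (J K a b : ℤ) : ℤ := b - min b (J - a) + min a (K - b)

theorem detailed_balance_ratio_symmetry (J K : ℤ) (hJ : 0 < J) (hJK : J < K)
    (μ ν : ℤ → ℝ)
    (hμpos : ∀ a, 0 ≤ a → a ≤ J → 0 < μ a)
    (hνpos : ∀ a, 0 ≤ a → a ≤ K → 0 < ν a)
    (hμsum : ∑ a ∈ Finset.Icc (0 : ℤ) J, μ a = 1)
    (hνsum : ∑ a ∈ Finset.Icc (0 : ℤ) K, ν a = 1)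
    (hratio : ∀ a, 0 ≤ a → a ≤ J → μ a / μ 0 = ν a / ν 0)
    (h1 : ∀ a b, 0 ≤ a → a ≤ J → 0 ≤ b → b ≤ K → J ≤ a + b → a + b ≤ K →
      ν a * ν b = ν (J - a) * ν (2 * a + b - J))
    (h2 : ∀ a b, 0 ≤ a → a ≤ J → 0 ≤ b → b ≤ K → K ≤ a + b →
      ν a * ν b = ν (b + J - K) * ν (a + K - J)) :
    ∀ a, 0 ≤ a → a ≤ J → ν (a + 1) / ν a = ν (J - a + 1) / ν (J - a) := by
  intro a ha haJ
  have key := h1 a (J - a + 1) ha haJ (by omega) (by omega) (by omega) (by omega)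
  have e : 2 * a + (J - a + 1) - J = a + 1 := by omega
  rw [e] at key
  have hpa : 0 < ν a := hνpos a ha (by omega)
  have hpJa : 0 < ν (J - a) := hνpos (J - a) (by omega) (by omega)
  field_simp
  linarith [key]
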